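/- Every unit disk in the Euclidean plane can be covered by at most five unit disks whose centers lie on the vertical lines x = k√3 + α for integers k, for any fixed shift α ∈ ℝ. -/
import Mathlib
open Real
set_option maxHeartbeats 1000000


lemma aux_cases (δ y ε u v : ℝ) (he2 : ε^2 = 1) (hδ2 : δ^2 ≤ 3/4) (hεδ : 0 ≤ ε*δ)
    (hball : (u - δ)^2 + (v - y)^2 ≤ 1) :
    (u^2 + (v - (y+1/2))^2 ≤ 1) ∨ (u^2 + (v-(y-1/2))^2 ≤ 1) ∨
    ((u-ε*Real.sqrt 3)^2 + (v-(y+1/2))^2 ≤ 1) ∨ ((u-ε*Real.sqrt 3)^2 + (v-(y-1/2))^2 ≤ 1) ∨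
    ((u+ε*Real.sqrt 3)^2 + (v-y)^2 ≤ 1) := by
  have h3 : (Real.sqrt 3)^2 = 3 := Real.sq_sqrt (by norm_num)
  have h3' : (1:ℝ) ≤ Real.sqrt 3 := by nlinarith [Real.sqrt_nonneg 3]
  have hvy : (v-y)^2 ≤ 1 := by nlinarith [sq_nonneg (u-δ)]
  have hwu : (ε*u)^2 = u^2 := by linear_combination u^2*he2
  have hεδb : ε*δ ≤ Real.sqrt 3/2 := by
    by_contra hc; push_neg at hc
    have hdu : (ε*δ)^2 = δ^2 := by linear_combination δ^2*he2
    nlinarith [mul_pos (show (0:ℝ) < ε*δ + Real.sqrt 3/2 by nlinarith)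
      (show (0:ℝ) < ε*δ - Real.sqrt 3/2 by linarith)]
  rcases le_or_gt (u^2) (3/4) with hu | hu
  · rcases le_or_gt y v with hv | hv
    · left; nlinarith [sq_nonneg (v-y)]
    · right; left; nlinarith [sq_nonneg (v-y)]
  · have hud : (ε*u - ε*δ)^2 ≤ 1 := by
      have e : (ε*u - ε*δ)^2 = (u-δ)^2 := by linear_combination (u-δ)^2*he2
      rw [e]; nlinarith [sq_nonneg (v-y)]
    rcases le_or_gt 0 (ε*u) with hw | hw
    · -- far side
      have hwlo : Real.sqrt 3/2 ≤ ε*u := by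
        by_contra hc; push_neg at hc
        nlinarith [mul_pos (show (0:ℝ) < Real.sqrt 3/2 + ε*u by nlinarith)
          (show (0:ℝ) < Real.sqrt 3/2 - ε*u by linarith)]
      have hwhi : ε*u ≤ ε*δ + 1 := by nlinarith [sq_nonneg (ε*u - ε*δ - 1)]
      have key : (u - ε*Real.sqrt 3)^2 ≤ 3/4 := by
        have e1 : (u - ε*Real.sqrt 3)^2 = (ε*u - Real.sqrt 3)^2 := by
          linear_combination (Real.sqrt 3^2 - u^2)*he2
        rw [e1]
        nlinarith [mul_nonneg (show (0:ℝ) ≤ ε*u - Real.sqrt 3/2 by linarith)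
          (show (0:ℝ) ≤ Real.sqrt 3/2 - (ε*u - Real.sqrt 3) by linarith)]
      rcases le_or_gt y v with hv | hv
      · right; right; left; nlinarith [sq_nonneg (v-y)]
      · right; right; right; left; nlinarith [sq_nonneg (v-y)]
    · -- near sliver
      right; right; right; right
      have hwneg : ε*u ≤ -(Real.sqrt 3/2) := by
        by_contra hc; push_neg at hc
        nlinarith [mul_pos (show (0:ℝ) < ε*u + Real.sqrt 3/2 by linarith)
          (show (0:ℝ) < Real.sqrt 3/2 - ε*u by linarith)]
      have hexp : (u + ε*Real.sqrt 3)^2 = (ε*u)^2 + 2*Real.sqrt 3*(ε*u) + 3 := by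
        linear_combination (Real.sqrt 3^2 - u^2)*he2 + h3
      have hexp2 : (u - δ)^2 = (ε*u)^2 - 2*(ε*u)*(ε*δ) + δ^2 := by
        linear_combination (2*u*δ-u^2)*he2
      nlinarith [mul_nonneg hεδ (show (0:ℝ) ≤ -(ε*u) by linarith),
        mul_nonneg (show (0:ℝ) ≤ Real.sqrt 3 by linarith)
          (show (0:ℝ) ≤ -(ε*u) - Real.sqrt 3/2 by linarith), sq_nonneg δ]

noncomputable def ptE (a b : ℝ) : EuclideanSpace ℝ (Fin 2) :=
  (EuclideanSpace.equiv (Fin 2) ℝ).symm ![a, b]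

@[simp] lemma ptE_zero (a b : ℝ) : ptE a b 0 = a := rfl
@[simp] lemma ptE_one (a b : ℝ) : ptE a b 1 = b := rfl

lemma mem_ball_ptE (p : EuclideanSpace ℝ (Fin 2)) (a b : ℝ)
    (h : (p 0 - a)^2 + (p 1 - b)^2 ≤ 1) : p ∈ Metric.closedBall (ptE a b) 1 := by
  rw [Metric.mem_closedBall, EuclideanSpace.dist_eq, Fin.sum_univ_two]
  apply Real.sqrt_le_one.mpr
  simpa [Real.dist_eq, sq_abs] using h

lemma aux_main (α : ℝ) (c : EuclideanSpace ℝ (Fin 2)) (n e : ℤ) (ε : ℝ)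
    (he : (e:ℝ) = ε) (he2 : ε^2 = 1)
    (hδ : (c 0 - ((n:ℝ)*Real.sqrt 3 + α))^2 ≤ 3/4)
    (hεδ : 0 ≤ ε*(c 0 - ((n:ℝ)*Real.sqrt 3 + α))) :
    ∃ s : Finset (EuclideanSpace ℝ (Fin 2)), s.card ≤ 5 ∧
      (∀ q ∈ s, ∃ k : ℤ, q 0 = k * Real.sqrt 3 + α) ∧
      Metric.closedBall c 1 ⊆ ⋃ q ∈ s, Metric.closedBall q 1 := by
  set L : ℝ := (n:ℝ)*Real.sqrt 3 + α with hL
  classical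
  refine ⟨{ptE L (c 1 + 1/2), ptE L (c 1 - 1/2),
           ptE (L + ε*Real.sqrt 3) (c 1 + 1/2), ptE (L + ε*Real.sqrt 3) (c 1 - 1/2),
           ptE (L - ε*Real.sqrt 3) (c 1)}, ?_, ?_, ?_⟩
  · refine (Finset.card_insert_le _ _).trans (Nat.succ_le_succ ?_)
    refine (Finset.card_insert_le _ _).trans (Nat.succ_le_succ ?_)
    refine (Finset.card_insert_le _ _).trans (Nat.succ_le_succ ?_)
    refine (Finset.card_insert_le _ _).trans (Nat.succ_le_succ ?_)
    simp
  · intro q hq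
    simp only [Finset.mem_insert, Finset.mem_singleton] at hq
    rcases hq with h|h|h|h|h <;> subst h
    · exact ⟨n, by simp [hL]⟩
    · exact ⟨n, by simp [hL]⟩
    · exact ⟨n + e, by rw [ptE_zero, hL, ← he]; push_cast; ring⟩
    · exact ⟨n + e, by rw [ptE_zero, hL, ← he]; push_cast; ring⟩
    · exact ⟨n - e, by rw [ptE_zero, hL, ← he]; push_cast; ring⟩
  · intro p hp
    have hball : (p 0 - L - (c 0 - L))^2 + (p 1 - c 1)^2 ≤ 1 := by
      have := Metric.mem_closedBall.mp hp
      rw [EuclideanSpace.dist_eq, Fin.sum_univ_two] at this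
      have h2 := Real.sqrt_le_one (x := dist (p 0) (c 0)^2 + dist (p 1) (c 1)^2)
      have h4 : dist (p 0) (c 0)^2 + dist (p 1) (c 1)^2 ≤ 1 := by
        nlinarith [Real.sq_sqrt (show (0:ℝ) ≤ dist (p 0) (c 0)^2 + dist (p 1) (c 1)^2 by positivity),
          Real.sqrt_nonneg (dist (p 0) (c 0)^2 + dist (p 1) (c 1)^2)]
      simpa [Real.dist_eq, sq_abs] using h4
    have := aux_cases (c 0 - L) (c 1) ε (p 0 - L) (p 1) he2 hδ hεδ hball
    simp only [Set.mem_iUnion, Finset.mem_insert, Finset.mem_singleton, exists_prop]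
    rcases this with h|h|h|h|h
    · exact ⟨_, Or.inl rfl, mem_ball_ptE p _ _ (by simpa using h)⟩
    · exact ⟨_, Or.inr (Or.inl rfl), mem_ball_ptE p _ _ (by simpa using h)⟩
    · exact ⟨_, Or.inr (Or.inr (Or.inl rfl)), mem_ball_ptE p _ _ (by rw [show p 0 - (L + ε*Real.sqrt 3) = p 0 - L - ε*Real.sqrt 3 by ring]; exact h)⟩
    · exact ⟨_, Or.inr (Or.inr (Or.inr (Or.inl rfl))), mem_ball_ptE p _ _ (by rw [show p 0 - (L + ε*Real.sqrt 3) = p 0 - L - ε*Real.sqrt 3 by ring]; exact h)⟩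
    · exact ⟨_, Or.inr (Or.inr (Or.inr (Or.inr rfl))), mem_ball_ptE p _ _ (by rw [show p 0 - (L - ε*Real.sqrt 3) = p 0 - L + ε*Real.sqrt 3 by ring]; exact h)⟩

/-- Every Euclidean unit disk can be covered by at most five unit disks whose centers lie on
the vertical lines `x = k√3 + α`, `k ∈ ℤ`, for any fixed shift `α`. -/
theorem disk_covered_by_five_restricted (α : ℝ) (c : EuclideanSpace ℝ (Fin 2)) :
    ∃ s : Finset (EuclideanSpace ℝ (Fin 2)), s.card ≤ 5 ∧
      (∀ q ∈ s, ∃ k : ℤ, q 0 = k * Real.sqrt 3 + α) ∧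
      Metric.closedBall c 1 ⊆ ⋃ q ∈ s, Metric.closedBall q 1 := by
  have h3 : (Real.sqrt 3)^2 = 3 := Real.sq_sqrt (by norm_num)
  have h3pos : (0:ℝ) < Real.sqrt 3 := Real.sqrt_pos.mpr (by norm_num)
  set n : ℤ := round ((c 0 - α) / Real.sqrt 3) with hn
  have hr : |(c 0 - α) / Real.sqrt 3 - (n:ℝ)| ≤ 1/2 := abs_sub_round _
  have hδ : (c 0 - ((n:ℝ)*Real.sqrt 3 + α))^2 ≤ 3/4 := by
    have he : c 0 - ((n:ℝ)*Real.sqrt 3 + α) = Real.sqrt 3 * ((c 0 - α) / Real.sqrt 3 - (n:ℝ)) := by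
      field_simp; ring
    rw [he, mul_pow]
    have := sq_abs ((c 0 - α) / Real.sqrt 3 - (n:ℝ))
    nlinarith [sq_nonneg ((c 0 - α) / Real.sqrt 3 - (n:ℝ)), abs_nonneg ((c 0 - α) / Real.sqrt 3 - (n:ℝ))]
  rcases le_or_gt 0 (c 0 - ((n:ℝ)*Real.sqrt 3 + α)) with h | h
  · exact aux_main α c n 1 1 (by norm_num) (by norm_num) hδ (by simpa using h)
  · exact aux_main α c n (-1) (-1) (by norm_num) (by norm_num) hδ (by nlinarith)
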